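/- Let a ∈ ℝ, k ∈ ℕ and s ∈ ℂ with Re s > 1/2, and set w := 2/(λ(1−x)) > 0. Then both of the following series converge absolutely, and Σ_{n=1}^∞ e^{2πina} · (2/(nλ(1−x)+2))^{2s} · (xₙ − 1)^k = (−1)^k · 2^{2s+k} · λ^{−(2s+k)} · (1−x)^{−2s} · Σ_{n=1}^∞ e^{2πina} (n+w)^{−(2s+k)}. (Closed-form evaluation, in terms of a Lerch zeta series, of the parabolic part of the fast transfer operator applied to the monomial (z−1)^k.) -/

import Mathlib

/-!
STATEMENT 7: Closed-form evaluation, in terms of a Lerch zeta series, of the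
parabolic part of the fast transfer operator applied to the monomial `(z−1)^k`,
at a real point `x < 1`.  Here `xₙ = h₁^{-n}.x = ((2−nλ)x+nλ)/(nλ(1−x)+2)` and
`w = 2/(λ(1−x))`.
-/

open Complex

noncomputable section

-- split of ofReal cpow over products of nonneg reals
private lemma ofReal_cpow_pos_add (t : ℝ) (ht : 0 < t) (y z : ℂ) :
    ((t : ℂ)) ^ (y + z) = (t : ℂ) ^ y * (t : ℂ) ^ z :=
  Complex.cpow_add _ _ (by exact_mod_cast ht.ne')

private lemma key (lam : ℝ) (hlam : 0 < lam) (x : ℝ) (hx : x < 1) (k : ℕ) (s : ℂ)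
    (t : ℝ) (ht : 0 < t) :
    (((2 / (t * lam * (1 - x) + 2)) : ℝ) : ℂ) ^ (2 * s) *
      (((((2 - t * lam) * x + t * lam) / (t * lam * (1 - x) + 2) - 1) ^ k : ℝ) : ℂ)
    = ((-1 : ℂ) ^ k * (2 : ℂ) ^ (2 * s + (k : ℂ)) * ((lam : ℂ)) ^ (-(2 * s + (k : ℂ))) *
        (((1 - x : ℝ)) : ℂ) ^ (-(2 * s))) *
      (((t + 2 / (lam * (1 - x)) : ℝ)) : ℂ) ^ (-(2 * s + (k : ℂ))) := by
  have h1x : (0:ℝ) < 1 - x := by linarith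
  have hr : (0:ℝ) < lam * (1 - x) := mul_pos hlam h1x
  have hden : (0:ℝ) < t * lam * (1 - x) + 2 := by nlinarith
  set den : ℝ := t * lam * (1 - x) + 2 with hden_def
  have htw : (0:ℝ) < t + 2 / (lam * (1 - x)) := by positivity
  have hxk : ((2 - t * lam) * x + t * lam) / den - 1 = (-2) * (1 - x) / den := by
    field_simp
    ring
  have hsplit : den = lam * ((1 - x) * (t + 2 / (lam * (1 - x)))) := by
    field_simp
    ring
  -- complex nonzero facts
  have hdenC : ((den : ℂ)) ≠ 0 := by exact_mod_cast hden.ne'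
  have h2C : ((2 : ℝ) : ℂ) ≠ 0 := by norm_num
  -- step 1: (2/den)^(2s) = 2^(2s) * den^(-(2s))
  have s1 : (((2 / den : ℝ)) : ℂ) ^ (2 * s)
      = ((2:ℝ) : ℂ) ^ (2 * s) * ((den : ℝ) : ℂ) ^ (-(2 * s)) := by
    rw [show (2 / den : ℝ) = 2 * den⁻¹ by ring, Complex.ofReal_mul,
      Complex.mul_cpow_ofReal_nonneg (by norm_num) (by positivity), Complex.ofReal_inv,
      Complex.inv_cpow _ _ (by
        rw [Complex.arg_ofReal_of_nonneg hden.le]; exact Real.pi_ne_zero.symm),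
      ← Complex.cpow_neg]
  -- step 2: monomial
  have s2 : ((((((2 - t * lam) * x + t * lam) / den - 1) ^ k : ℝ)) : ℂ)
      = (-1 : ℂ) ^ k * ((2:ℝ):ℂ) ^ (k:ℂ) * (((1 - x : ℝ)) : ℂ) ^ (k:ℂ) *
        ((den : ℝ) : ℂ) ^ (-(k:ℂ)) := by
    rw [hxk]
    rw [Complex.cpow_natCast, Complex.cpow_natCast, ← Complex.cpow_natCast _ k,
      Complex.cpow_neg, Complex.cpow_natCast]
    push_cast
    field_simp
    rw [neg_pow, div_pow, mul_pow]
    field_simp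
    rw [Complex.cpow_natCast]
  rw [s1, s2]
  have e2 : ((2:ℝ):ℂ) ^ (2 * s) * ((2:ℝ):ℂ) ^ (k:ℂ) = (2:ℂ) ^ (2 * s + (k:ℂ)) := by
    have h22 : ((2:ℝ):ℂ) = (2:ℂ) := by norm_num
    rw [h22, Complex.cpow_add _ _ (by norm_num : (2:ℂ) ≠ 0)]
  have eden : ((den : ℝ) : ℂ) ^ (-(2*s)) * ((den : ℝ) : ℂ) ^ (-(k:ℂ))
      = ((lam : ℂ)) ^ (-(2 * s + (k : ℂ))) * (((1 - x : ℝ)) : ℂ) ^ (-(2 * s + (k : ℂ))) *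
        (((t + 2 / (lam * (1 - x)) : ℝ)) : ℂ) ^ (-(2 * s + (k : ℂ))) := by
    rw [← ofReal_cpow_pos_add den hden, show -(2*s) + -(k:ℂ) = -(2*s + (k:ℂ)) by ring,
      hsplit]
    rw [Complex.ofReal_mul, Complex.mul_cpow_ofReal_nonneg hlam.le (by positivity),
      Complex.ofReal_mul, Complex.mul_cpow_ofReal_nonneg h1x.le htw.le]
    ring
  have e1x : (((1 - x : ℝ)) : ℂ) ^ (k:ℂ) * (((1 - x : ℝ)) : ℂ) ^ (-(2 * s + (k : ℂ)))
      = (((1 - x : ℝ)) : ℂ) ^ (-(2 * s)) := by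
    rw [← ofReal_cpow_pos_add _ h1x]; ring_nf
  calc ((2:ℝ):ℂ) ^ (2*s) * ((den:ℝ):ℂ) ^ (-(2*s)) *
        ((-1:ℂ)^k * ((2:ℝ):ℂ) ^ (k:ℂ) * (((1-x:ℝ)):ℂ) ^ (k:ℂ) * ((den:ℝ):ℂ) ^ (-(k:ℂ)))
      = (-1:ℂ)^k * (((2:ℝ):ℂ) ^ (2*s) * ((2:ℝ):ℂ) ^ (k:ℂ)) * (((1-x:ℝ)):ℂ) ^ (k:ℂ) *
        (((den:ℝ):ℂ) ^ (-(2*s)) * ((den:ℝ):ℂ) ^ (-(k:ℂ))) := by ring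
    _ = (-1:ℂ)^k * (2:ℂ) ^ (2*s + (k:ℂ)) * ((lam:ℂ)) ^ (-(2*s + (k:ℂ))) *
        ((((1-x:ℝ)):ℂ) ^ (k:ℂ) * (((1-x:ℝ)):ℂ) ^ (-(2*s + (k:ℂ)))) *
        (((t + 2 / (lam * (1 - x)) : ℝ)) : ℂ) ^ (-(2 * s + (k : ℂ))) := by
        rw [e2, eden]; ring
    _ = _ := by rw [e1x]

private lemma norm_term (n : ℕ) (a : ℝ) (T : ℝ) (hT : 0 < T) (z : ℂ) :
    ‖Complex.exp (2 * Real.pi * Complex.I * ((n : ℂ) + 1) * (a : ℂ)) * ((T : ℂ)) ^ z‖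
      = T ^ z.re := by
  rw [norm_mul, Complex.norm_exp,
    Complex.norm_cpow_eq_rpow_re_of_pos hT]
  have : (2 * (Real.pi:ℂ) * Complex.I * ((n : ℂ) + 1) * (a : ℂ)).re = 0 := by
    simp [Complex.mul_re, Complex.mul_im]
  rw [this, Real.exp_zero, one_mul]

private lemma summ_aux (w : ℝ) (hw : 0 < w) (p : ℝ) (hp : p < -1) :
    Summable (fun n : ℕ => ((n : ℝ) + 1 + w) ^ p) := by
  have hbase : Summable (fun n : ℕ => ((n : ℝ) + 1) ^ p) := by
    have := (summable_nat_add_iff 1).2 (Real.summable_nat_rpow.mpr hp)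
    exact this.congr fun n => by push_cast; ring_nf
  refine Summable.of_nonneg_of_le (fun n => Real.rpow_nonneg (by positivity) _)
    (fun n => Real.rpow_le_rpow_of_nonpos (by positivity) (by linarith) (by linarith)) hbase


theorem parabolic_part_eq_lerch (lam : ℝ) (hlam : 0 < lam) (x : ℝ) (hx : x < 1)
    (a : ℝ) (k : ℕ) (s : ℂ) (hs : 1 / 2 < s.re) :
    let xseq : ℕ → ℝ := fun n =>
      ((2 - (n : ℝ) * lam) * x + (n : ℝ) * lam) / ((n : ℝ) * lam * (1 - x) + 2)
    let w : ℝ := 2 / (lam * (1 - x))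
    Summable (fun n : ℕ =>
      ‖Complex.exp (2 * Real.pi * Complex.I * ((n : ℂ) + 1) * (a : ℂ)) *
          (((2 / (((n : ℝ) + 1) * lam * (1 - x) + 2)) : ℝ) : ℂ) ^ (2 * s) *
          (((xseq (n + 1) - 1) ^ k : ℝ) : ℂ)‖) ∧
    Summable (fun n : ℕ =>
      ‖Complex.exp (2 * Real.pi * Complex.I * ((n : ℂ) + 1) * (a : ℂ)) *
          ((((n : ℝ) + 1 + w) : ℝ) : ℂ) ^ (-(2 * s + (k : ℂ)))‖) ∧
    (∑' n : ℕ,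
        Complex.exp (2 * Real.pi * Complex.I * ((n : ℂ) + 1) * (a : ℂ)) *
          (((2 / (((n : ℝ) + 1) * lam * (1 - x) + 2)) : ℝ) : ℂ) ^ (2 * s) *
          (((xseq (n + 1) - 1) ^ k : ℝ) : ℂ))
      = (-1 : ℂ) ^ k * (2 : ℂ) ^ (2 * s + (k : ℂ)) * ((lam : ℂ)) ^ (-(2 * s + (k : ℂ))) *
          (((1 - x : ℝ)) : ℂ) ^ (-(2 * s)) *
          ∑' n : ℕ,
            Complex.exp (2 * Real.pi * Complex.I * ((n : ℂ) + 1) * (a : ℂ)) *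
              ((((n : ℝ) + 1 + w) : ℝ) : ℂ) ^ (-(2 * s + (k : ℂ))) := by
  intro xseq w
  have h1x : (0:ℝ) < 1 - x := by linarith
  have hw : (0:ℝ) < w := by positivity
  set C : ℂ := (-1 : ℂ) ^ k * (2 : ℂ) ^ (2 * s + (k : ℂ)) * ((lam : ℂ)) ^ (-(2 * s + (k : ℂ))) *
      (((1 - x : ℝ)) : ℂ) ^ (-(2 * s)) with hC
  have hterm : ∀ n : ℕ,
      Complex.exp (2 * Real.pi * Complex.I * ((n : ℂ) + 1) * (a : ℂ)) *
          (((2 / (((n : ℝ) + 1) * lam * (1 - x) + 2)) : ℝ) : ℂ) ^ (2 * s) *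
          (((xseq (n + 1) - 1) ^ k : ℝ) : ℂ)
        = C * (Complex.exp (2 * Real.pi * Complex.I * ((n : ℂ) + 1) * (a : ℂ)) *
            ((((n : ℝ) + 1 + w) : ℝ) : ℂ) ^ (-(2 * s + (k : ℂ)))) := by
    intro n
    have hx1 : xseq (n + 1)
        = ((2 - ((n:ℝ)+1) * lam) * x + ((n:ℝ)+1) * lam) / (((n:ℝ)+1) * lam * (1 - x) + 2) := by
      simp only [xseq]; push_cast; ring_nf
    have hkey := key lam hlam x hx k s ((n:ℝ)+1) (by positivity)
    have hwsum : ((n:ℝ) + 1 + w) = ((n:ℝ)+1) + 2 / (lam * (1 - x)) := by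
      simp only [w]
    rw [hx1, hwsum, mul_assoc, hkey, hC]
    ring
  have hnorm2 : ∀ n : ℕ,
      ((n : ℝ) + 1 + w) ^ (-(2 * s + (k : ℂ))).re
        = ‖Complex.exp (2 * Real.pi * Complex.I * ((n : ℂ) + 1) * (a : ℂ)) *
          ((((n : ℝ) + 1 + w) : ℝ) : ℂ) ^ (-(2 * s + (k : ℂ)))‖ := fun n =>
    (norm_term n a _ (by positivity) _).symm
  have hre : (-(2 * s + (k : ℂ))).re = -(2 * s.re + (k:ℝ)) := by
    simp [Complex.add_re, Complex.mul_re]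
  have hsum2 : Summable (fun n : ℕ =>
      ‖Complex.exp (2 * Real.pi * Complex.I * ((n : ℂ) + 1) * (a : ℂ)) *
          ((((n : ℝ) + 1 + w) : ℝ) : ℂ) ^ (-(2 * s + (k : ℂ)))‖) := by
    refine Summable.congr ?_ hnorm2
    rw [hre]
    exact summ_aux w hw _ (by linarith [Nat.cast_nonneg (α := ℝ) k])
  refine ⟨?_, hsum2, ?_⟩
  · refine Summable.congr (hsum2.mul_left ‖C‖) fun n => ?_
    rw [hterm n]; exact (norm_mul _ _).symm
  · rw [tsum_congr hterm, tsum_mul_left]
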